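/- arXiv:2402.06008 — 2 statements merged into one kernel-verified Lean document; each statement's English description precedes it below -/
import Mathlib

section
/- Let k ∈ {4,5} and let σ = (x,y) be a proper (Z_k × Z_2)-coloring of a snark G. Then the set Y_0 = {e ∈ E(G) : y(e) = 0} is a perfect matching in G. -/
open SimpleGraph

variable {V : Type*}

/-- A cubic graph: every vertex has exactly `3` neighbours. -/
def IsCubic (G : SimpleGraph V) : Prop :=
  ∀ v : V, (G.neighborSet v).ncard = 3

/-- Two edges (as elements of `Sym2 V`) are adjacent if they are distinct and
share an endpoint. -/
def EdgesAdj (e₁ e₂ : Sym2 V) : Prop :=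
  e₁ ≠ e₂ ∧ ∃ v : V, v ∈ e₁ ∧ v ∈ e₂

/-- `G` has a proper `3`-edge-coloring. -/
def HasProper3EdgeColoring (G : SimpleGraph V) : Prop :=
  ∃ c : Sym2 V → Fin 3,
    ∀ e₁ ∈ G.edgeSet, ∀ e₂ ∈ G.edgeSet, EdgesAdj e₁ e₂ → c e₁ ≠ c e₂

/-- A bridgeless graph: no edge is a bridge. -/
def IsBridgeless (G : SimpleGraph V) : Prop :=
  ∀ e ∈ G.edgeSet, ¬ G.IsBridge e

/-- A snark: a connected bridgeless cubic graph admitting no proper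
`3`-edge-coloring. -/
def IsSnark (G : SimpleGraph V) : Prop :=
  G.Connected ∧ IsBridgeless G ∧ IsCubic G ∧ ¬ HasProper3EdgeColoring G

/-- A proper abelian coloring of `G` by the abelian group `A`: every edge gets a
nonzero color, adjacent edges get distinct colors, and at every vertex the
colors of the incident edges sum to zero. -/
def IsProperAbelianColoring {A : Type*} [AddCommGroup A]
    (G : SimpleGraph V) (σ : Sym2 V → A) : Prop :=
  (∀ e ∈ G.edgeSet, σ e ≠ 0) ∧
  (∀ e₁ ∈ G.edgeSet, ∀ e₂ ∈ G.edgeSet, EdgesAdj e₁ e₂ → σ e₁ ≠ σ e₂) ∧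
  (∀ v : V, ∑ᶠ e ∈ G.incidenceSet v, σ e = 0)

/-- `F` is a `2`-factor of `G`: a spanning `2`-regular subgraph. -/
def IsTwoFactor (G F : SimpleGraph V) : Prop :=
  F ≤ G ∧ ∀ v : V, (F.neighborSet v).ncard = 2

/-- `M` is a matching contained in the edge set of `F`. -/
def IsMatchingIn (M : Set (Sym2 V)) (F : SimpleGraph V) : Prop :=
  M ⊆ F.edgeSet ∧ ∀ e₁ ∈ M, ∀ e₂ ∈ M, e₁ ≠ e₂ → ¬ ∃ v : V, v ∈ e₁ ∧ v ∈ e₂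

/-- A perfect matching in `F`: a matching covering every vertex. -/
def IsPerfectMatchingIn (M : Set (Sym2 V)) (F : SimpleGraph V) : Prop :=
  IsMatchingIn M F ∧ ∀ v : V, ∃ e ∈ M, v ∈ e

/-- A maximum matching in `F`: a matching of maximum cardinality. -/
def IsMaximumMatchingIn (M : Set (Sym2 V)) (F : SimpleGraph V) : Prop :=
  IsMatchingIn M F ∧ ∀ M' : Set (Sym2 V), IsMatchingIn M' F → M'.ncard ≤ M.ncard

/-- A `3`-vertex of `H`: a vertex of degree `3`. -/
def IsThreeVertex (H : SimpleGraph V) (v : V) : Prop := (H.neighborSet v).ncard = 3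

/-- A `2`-vertex of `H`: a vertex of degree `2`. -/
def IsTwoVertex (H : SimpleGraph V) (v : V) : Prop := (H.neighborSet v).ncard = 2

/-- An `F`-path in `H`: a (nontrivial) path in `H` whose two end-vertices are
`3`-vertices of `H`, whose interior vertices are all `2`-vertices of `H`, and
whose two end-edges belong to `F`. -/
structure FPathIn (H F : SimpleGraph V) where
  a : V
  b : V
  walk : H.Walk a b
  isPath : walk.IsPath
  len_pos : 0 < walk.length
  ends_three : IsThreeVertex H a ∧ IsThreeVertex H b
  interior_two : ∀ w ∈ walk.support, w ≠ a → w ≠ b → IsTwoVertex H w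
  end_edges : ∀ e ∈ walk.edges, (a ∈ e ∨ b ∈ e) → e ∈ F.edgeSet

/-- The vertices of an `F`-path. -/
def FPathIn.supp {H F : SimpleGraph V} (P : FPathIn H F) : Set V :=
  {v | v ∈ P.walk.support}

/-- The edges of an `F`-path. -/
def FPathIn.edgeSet {H F : SimpleGraph V} (P : FPathIn H F) : Set (Sym2 V) :=
  {e | e ∈ P.walk.edges}

/-- An `F`-matching of `H`: a collection of pairwise vertex-disjoint `F`-paths
such that every `3`-vertex of `H` lies on (exactly) one of them. -/
def IsFMatching (H F : SimpleGraph V) (Ps : Set (FPathIn H F)) : Prop :=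
  (∀ P ∈ Ps, ∀ Q ∈ Ps, P ≠ Q → Disjoint P.supp Q.supp) ∧
  (∀ v : V, IsThreeVertex H v → ∃ P ∈ Ps, v ∈ P.supp)

/-- The set of edges lying on the paths of an `F`-matching. -/
def FMatchingEdges {H F : SimpleGraph V} (Ps : Set (FPathIn H F)) : Set (Sym2 V) :=
  {e | ∃ P ∈ Ps, e ∈ P.walk.edges}

/-- The `F`-complement of an `F`-matching: the subgraph of `H` induced by the
edges of `H` not lying on the paths of `Ps`. -/
def FComplement {H F : SimpleGraph V} (Ps : Set (FPathIn H F)) : SimpleGraph V :=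
  H.deleteEdges (FMatchingEdges Ps)

/-- The number of `3`-vertices of `H` lying on a connected component `c` of `K`. -/
noncomputable def threeCount (H : SimpleGraph V) {K : SimpleGraph V} (c : K.ConnectedComponent) : ℕ :=
  {v ∈ c.supp | IsThreeVertex H v}.ncard

/-- The graph `K` (an `F`-complement, whose nontrivial components are the
loops) is `3`-even w.r.t. `H`: every component carries an even number of
`3`-vertices of `H`. -/
def IsThreeEvenComplement (H K : SimpleGraph V) : Prop :=
  ∀ c : K.ConnectedComponent, Even (threeCount H c)

/-- A component of `K` is a `3`-odd loop if it carries an odd number of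
`3`-vertices of `H`. -/
def Is3OddLoop (H : SimpleGraph V) {K : SimpleGraph V} (c : K.ConnectedComponent) : Prop :=
  Odd (threeCount H c)

/-- The number of odd components (odd cycles, for a `2`-factor) of `F`. -/
noncomputable def oddCompCount (F : SimpleGraph V) : ℕ :=
  {c : F.ConnectedComponent | Odd c.supp.ncard}.ncard

/-- The number of even components (even cycles, for a `2`-factor) of `F`. -/
noncomputable def evenCompCount (F : SimpleGraph V) : ℕ :=
  {c : F.ConnectedComponent | Even c.supp.ncard}.ncard

/-- The oddness of `G`: the minimum number of odd cycles in a `2`-factor of `G`. -/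
noncomputable def oddness (G : SimpleGraph V) : ℕ :=
  sInf {n : ℕ | ∃ F : SimpleGraph V, IsTwoFactor G F ∧ oddCompCount F = n}

/-- `v` lies on an odd component (odd cycle) of `F`. -/
def OnOddCycle (F : SimpleGraph V) (v : V) : Prop :=
  Odd ((F.connectedComponentMk v).supp.ncard)

/-- A simple `F`-matching: an `F`-matching such that on each of its paths the
only edges lying on odd cycles of `F` are the edges incident to the
end-vertices. -/
def IsSimpleFMatching (H F : SimpleGraph V) (Ps : Set (FPathIn H F)) : Prop :=
  IsFMatching H F Ps ∧
  ∀ P ∈ Ps, ∀ e ∈ P.walk.edges,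
    (e ∈ F.edgeSet ∧ ∀ w ∈ e, OnOddCycle F w) → (P.a ∈ e ∨ P.b ∈ e)

/-- The set `C ⊆ V` carries a `Θ`-graph structure in `H`: two distinct vertices
joined by three internally disjoint paths whose union is exactly the part of
`H` on `C`. -/
def IsThetaOn (H : SimpleGraph V) (C : Set V) : Prop :=
  ∃ a b : V, a ≠ b ∧ ∃ p q r : H.Walk a b,
    p.IsPath ∧ q.IsPath ∧ r.IsPath ∧ p ≠ q ∧ p ≠ r ∧ q ≠ r ∧
    (∀ w ∈ p.support, w ∈ q.support → w = a ∨ w = b) ∧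
    (∀ w ∈ p.support, w ∈ r.support → w = a ∨ w = b) ∧
    (∀ w ∈ q.support, w ∈ r.support → w = a ∨ w = b) ∧
    C = {w | w ∈ p.support ∨ w ∈ q.support ∨ w ∈ r.support} ∧
    (∀ e ∈ H.edgeSet, (∀ w ∈ e, w ∈ C) → e ∈ p.edges ∨ e ∈ q.edges ∨ e ∈ r.edges)

/-- The set `C ⊆ V` carries a kayak-paddle graph structure in `H`: two
vertex-disjoint cycles joined by a path, their union being exactly the part of
`H` on `C`. -/
def IsKayakPaddleOn (H : SimpleGraph V) (C : Set V) : Prop :=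
  ∃ a b : V, ∃ (c₁ : H.Walk a a) (c₂ : H.Walk b b) (p : H.Walk a b),
    c₁.IsCycle ∧ c₂.IsCycle ∧ p.IsPath ∧
    (∀ w ∈ c₁.support, w ∉ c₂.support) ∧
    (∀ w ∈ p.support, w ∈ c₁.support → w = a) ∧
    (∀ w ∈ p.support, w ∈ c₂.support → w = b) ∧
    C = {w | w ∈ c₁.support ∨ w ∈ c₂.support ∨ w ∈ p.support} ∧
    (∀ e ∈ H.edgeSet, (∀ w ∈ e, w ∈ C) → e ∈ c₁.edges ∨ e ∈ c₂.edges ∨ e ∈ p.edges)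

/-- The set `C ⊆ V` carries an even cycle of `H` whose vertices and edges are
exactly the part of `H` on `C`. -/
def IsEvenCycleOn (H : SimpleGraph V) (C : Set V) : Prop :=
  ∃ a : V, ∃ W : H.Walk a a, W.IsCycle ∧ Even W.length ∧
    C = {w | w ∈ W.support} ∧
    (∀ e ∈ H.edgeSet, (∀ w ∈ e, w ∈ C) → e ∈ W.edges)

/-- `Meven` is a perfect matching of the even part `F_even` of the `2`-factor
`F`: a matching of `F` using only edges on even cycles and covering all
vertices of even cycles. -/
def IsPerfectMatchingOfEvenPart (Meven : Set (Sym2 V)) (F : SimpleGraph V) : Prop :=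
  IsMatchingIn Meven F ∧
  (∀ e ∈ Meven, ∀ w ∈ e, ¬ OnOddCycle F w) ∧
  (∀ v : V, ¬ OnOddCycle F v → ∃ e ∈ Meven, v ∈ e)

/-- Two odd components `c₁`, `c₂` of `F` are linked in `H_odd = G − M_even`:
there is a path of `H_odd` from `c₁` to `c₂` all of whose interior vertices
avoid odd cycles of `F` (i.e. are `2`-vertices of `H_odd`). -/
def OddCompLinked (G F : SimpleGraph V) (Meven : Set (Sym2 V))
    (c₁ c₂ : F.ConnectedComponent) : Prop :=
  ∃ u v : V, u ∈ c₁.supp ∧ v ∈ c₂.supp ∧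
    ∃ W : (G.deleteEdges Meven).Walk u v, W.IsPath ∧ 0 < W.length ∧
      ∀ w ∈ W.support, w ≠ u → w ≠ v → ¬ OnOddCycle F w

/-- The odd-cycle-incidence graph `K_odd`: vertices are the odd cycles of `F`,
two of them being adjacent iff they are linked by a path of
`H_odd = G − M_even` with all interior vertices `2`-vertices of `H_odd`
(this is `H_odd` with the edges of `F_odd` contracted and the `2`-vertices
suppressed). -/
def Kodd (G F : SimpleGraph V) (Meven : Set (Sym2 V)) :
    SimpleGraph {c : F.ConnectedComponent // Odd c.supp.ncard} where
  Adj c₁ c₂ := c₁ ≠ c₂ ∧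
    (OddCompLinked G F Meven c₁.1 c₂.1 ∨ OddCompLinked G F Meven c₂.1 c₁.1)
  symm := ⟨fun c₁ c₂ h => ⟨h.1.symm, h.2.symm⟩⟩
  loopless := ⟨fun c h => h.1 rfl⟩

/-- The set of edges of `K` lying on the connected component `c` of `K`. -/
def compEdgeSet (K : SimpleGraph V) (c : K.ConnectedComponent) : Set (Sym2 V) :=
  {e ∈ K.edgeSet | ∃ w, w ∈ e ∧ w ∈ c.supp}

/-- The set `E_Ps` of end-edges of the paths of an `F`-matching `Ps`. -/
def endEdges {H F : SimpleGraph V} (Ps : Set (FPathIn H F)) : Set (Sym2 V) :=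
  {e | ∃ P ∈ Ps, e ∈ P.walk.edges ∧ (P.a ∈ e ∨ P.b ∈ e)}

/-- The edge set attached to a vertex of the loop-cycle-incidence graph `B`:
a component of `F − E_Ps`, a loop of the `F`-complement `ℒ`, or a path of `Ps`. -/
def bEdgeSet (F : SimpleGraph V) {H : SimpleGraph V} (Ps : Set (FPathIn H F)) :
    (F.deleteEdges (endEdges Ps)).ConnectedComponent ⊕
      ((FComplement Ps).ConnectedComponent ⊕ ↥Ps) → Set (Sym2 V)
  | Sum.inl C => compEdgeSet (F.deleteEdges (endEdges Ps)) C
  | Sum.inr (Sum.inl c) => compEdgeSet (FComplement Ps) c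
  | Sum.inr (Sum.inr P) => FPathIn.edgeSet P.1

/-- The loop-cycle-incidence graph `B`: a bipartite graph on
`𝒞* ⊕ (ℒ ⊕ Ps)`, where `𝒞*` is the set of components of `F − E_Ps`, `ℒ` the
set of components (loops) of the `F`-complement and `Ps` the paths of the
`F`-matching; a component of `F − E_Ps` is adjacent to a loop/path iff they
share an edge of `G`. -/
def LoopCycleIncidence (F : SimpleGraph V) {H : SimpleGraph V}
    (Ps : Set (FPathIn H F)) :
    SimpleGraph ((F.deleteEdges (endEdges Ps)).ConnectedComponent ⊕
      ((FComplement Ps).ConnectedComponent ⊕ ↥Ps)) where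
  Adj a b := ((a.isLeft ∧ b.isRight) ∨ (a.isRight ∧ b.isLeft)) ∧
    ∃ e, e ∈ bEdgeSet F Ps a ∧ e ∈ bEdgeSet F Ps b
  symm := by
    constructor
    rintro a b ⟨hs, e, h₁, h₂⟩
    exact ⟨by tauto, e, h₂, h₁⟩
  loopless := by
    constructor
    rintro a ⟨hs, -⟩
    rcases a with a | a <;> simp_all

/-- Remove a set of vertices from a graph (keeping them as isolated vertices):
used to form `B − Ps`. -/
def removeVerts {W : Type*} (B : SimpleGraph W) (S : Set W) : SimpleGraph W where
  Adj a b := B.Adj a b ∧ a ∉ S ∧ b ∉ S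
  symm := ⟨fun a b h => ⟨h.1.symm, h.2.2, h.2.1⟩⟩
  loopless := ⟨fun a h => B.loopless.irrefl a h.1⟩

/-- The vertices of `B` corresponding to the paths of `Ps`. -/
def PVerts (F : SimpleGraph V) {H : SimpleGraph V} (Ps : Set (FPathIn H F)) :
    Set ((F.deleteEdges (endEdges Ps)).ConnectedComponent ⊕
      ((FComplement Ps).ConnectedComponent ⊕ ↥Ps)) :=
  {x | ∃ P : ↥Ps, x = Sum.inr (Sum.inr P)}

/-- A permutation snark: a snark having a `2`-factor consisting of precisely
two chordless cycles. -/
def IsPermutationSnark (G : SimpleGraph V) : Prop :=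
  IsSnark G ∧ ∃ F : SimpleGraph V, IsTwoFactor G F ∧
    Nat.card F.ConnectedComponent = 2 ∧
    ∀ u v : V, G.Adj u v → ¬ F.Adj u v →
      F.connectedComponentMk u ≠ F.connectedComponentMk v

/-- The graph obtained from `H` (all of whose vertices have degree `2` or `3`)
by suppressing the degree-`2` vertices is `3`-edge-colorable: there is a
`3`-coloring of the edges which is constant through `2`-vertices and proper at
`3`-vertices. -/
def SuppressedThreeEdgeColorable (H : SimpleGraph V) : Prop :=
  ∃ c : Sym2 V → Fin 3,
    (∀ v : V, IsThreeVertex H v →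
      ∀ e₁ ∈ H.incidenceSet v, ∀ e₂ ∈ H.incidenceSet v, e₁ ≠ e₂ → c e₁ ≠ c e₂) ∧
    (∀ v : V, IsTwoVertex H v →
      ∀ e₁ ∈ H.incidenceSet v, ∀ e₂ ∈ H.incidenceSet v, c e₁ = c e₂)

/-- `e_r(G)`: the minimum cardinality of a set of pairwise non-adjacent edges
of `G` whose removal, followed by suppression of the resulting `2`-vertices,
yields a `3`-edge-colorable (cubic) graph. -/
noncomputable def edgeReductionNumber (G : SimpleGraph V) : ℕ :=
  sInf {n : ℕ | ∃ R : Set (Sym2 V), IsMatchingIn R G ∧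
    SuppressedThreeEdgeColorable (G.deleteEdges R) ∧ R.ncard = n}

lemma key4' :
    ∀ p q r : ZMod 4 × ZMod 2, (p ≠ 0 ∧ q ≠ 0 ∧ r ≠ 0 ∧ p ≠ q ∧ p ≠ r ∧ q ≠ r ∧
      p + q + r = 0) →
      ((p.2 = 0 ∧ q.2 ≠ 0 ∧ r.2 ≠ 0) ∨ (p.2 ≠ 0 ∧ q.2 = 0 ∧ r.2 ≠ 0) ∨
      (p.2 ≠ 0 ∧ q.2 ≠ 0 ∧ r.2 = 0)) := by decide

lemma key5' :
    ∀ p q r : ZMod 5 × ZMod 2, (p ≠ 0 ∧ q ≠ 0 ∧ r ≠ 0 ∧ p ≠ q ∧ p ≠ r ∧ q ≠ r ∧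
      p + q + r = 0) →
      ((p.2 = 0 ∧ q.2 ≠ 0 ∧ r.2 ≠ 0) ∨ (p.2 ≠ 0 ∧ q.2 = 0 ∧ r.2 ≠ 0) ∨
      (p.2 ≠ 0 ∧ q.2 ≠ 0 ∧ r.2 = 0)) := by decide

lemma keyk' {k : ℕ} (hk : k = 4 ∨ k = 5) :
    ∀ p q r : ZMod k × ZMod 2, (p ≠ 0 ∧ q ≠ 0 ∧ r ≠ 0 ∧ p ≠ q ∧ p ≠ r ∧ q ≠ r ∧
      p + q + r = 0) →
      ((p.2 = 0 ∧ q.2 ≠ 0 ∧ r.2 ≠ 0) ∨ (p.2 ≠ 0 ∧ q.2 = 0 ∧ r.2 ≠ 0) ∨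
      (p.2 ≠ 0 ∧ q.2 ≠ 0 ∧ r.2 = 0)) := by
  rcases hk with rfl | rfl
  · exact key4'
  · exact key5'

lemma cubic_incidence' {V : Type*} (G : SimpleGraph V) (hc : IsCubic G) (v : V) :
    ∃ a b c : V, a ≠ b ∧ a ≠ c ∧ b ≠ c ∧ G.Adj v a ∧ G.Adj v b ∧ G.Adj v c ∧
      G.incidenceSet v = {s(v,a), s(v,b), s(v,c)} := by
  obtain ⟨a, b, c, hab, hac, hbc, hset⟩ := Set.ncard_eq_three.mp (hc v)
  have ha : G.Adj v a := by have : a ∈ G.neighborSet v := by rw [hset]; simp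
                            exact this
  have hb : G.Adj v b := by have : b ∈ G.neighborSet v := by rw [hset]; simp
                            exact this
  have hcadj : G.Adj v c := by have : c ∈ G.neighborSet v := by rw [hset]; simp
                               exact this
  refine ⟨a, b, c, hab, hac, hbc, ha, hb, hcadj, ?_⟩
  ext e
  constructor
  · rintro ⟨he, hv⟩
    induction e with
    | _ x y =>
      have hadj : G.Adj x y := he
      rcases Sym2.mem_iff.mp hv with rfl | rfl
      · have : y ∈ G.neighborSet v := hadj
        rw [hset] at this
        rcases this with rfl | rfl | rfl <;> simp
      · have : x ∈ G.neighborSet v := hadj.symm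
        rw [hset] at this
        rcases this with rfl | rfl | rfl <;> simp [Sym2.eq_swap]
  · intro he
    rcases he with rfl | rfl | rfl
    · exact ⟨ha, Sym2.mem_mk_left v a⟩
    · exact ⟨hb, Sym2.mem_mk_left v b⟩
    · exact ⟨hcadj, Sym2.mem_mk_left v c⟩

lemma finsum_three' {M : Type*} [AddCommMonoid M] {α : Type*} (f : α → M)
    (e₁ e₂ e₃ : α) (h12 : e₁ ≠ e₂) (h13 : e₁ ≠ e₃) (h23 : e₂ ≠ e₃) :
    ∑ᶠ e ∈ ({e₁, e₂, e₃} : Set α), f e = f e₁ + f e₂ + f e₃ := by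
  classical
  rw [show ({e₁, e₂, e₃} : Set α) = (↑({e₁, e₂, e₃} : Finset α)) by simp,
    finsum_mem_coe_finset]
  rw [Finset.sum_insert (by simp [h12, h13]), Finset.sum_insert (by simp [h23]),
    Finset.sum_singleton, add_assoc]

-- STATEMENT 0
theorem statement0 {V : Type*} [Fintype V] (G : SimpleGraph V) (hG : IsSnark G)
    (k : ℕ) (hk : k = 4 ∨ k = 5)
    (σ : Sym2 V → ZMod k × ZMod 2)
    (hσ : IsProperAbelianColoring G σ) :
    IsPerfectMatchingIn {e ∈ G.edgeSet | (σ e).2 = 0} G := by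
  obtain ⟨-, -, hcubic, -⟩ := hG
  obtain ⟨hnz, hprop, hsum⟩ := hσ
  have triple : ∀ v : V, ∃ e₁ e₂ e₃ : Sym2 V,
      G.incidenceSet v = {e₁, e₂, e₃} ∧
      e₁ ∈ G.edgeSet ∧ e₂ ∈ G.edgeSet ∧ e₃ ∈ G.edgeSet ∧
      v ∈ e₁ ∧ v ∈ e₂ ∧ v ∈ e₃ ∧
      (((σ e₁).2 = 0 ∧ (σ e₂).2 ≠ 0 ∧ (σ e₃).2 ≠ 0) ∨
       ((σ e₁).2 ≠ 0 ∧ (σ e₂).2 = 0 ∧ (σ e₃).2 ≠ 0) ∨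
       ((σ e₁).2 ≠ 0 ∧ (σ e₂).2 ≠ 0 ∧ (σ e₃).2 = 0)) := by
    intro v
    obtain ⟨a, b, c, hab, hac, hbc, ha, hb, hc, hinc⟩ := cubic_incidence' G hcubic v
    have m1 : s(v,a) ∈ G.edgeSet := ha
    have m2 : s(v,b) ∈ G.edgeSet := hb
    have m3 : s(v,c) ∈ G.edgeSet := hc
    have h12 : s(v,a) ≠ s(v,b) := fun h => hab (Sym2.congr_right.mp h)
    have h13 : s(v,a) ≠ s(v,c) := fun h => hac (Sym2.congr_right.mp h)
    have h23 : s(v,b) ≠ s(v,c) := fun h => hbc (Sym2.congr_right.mp h)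
    have hsumv : σ s(v,a) + σ s(v,b) + σ s(v,c) = 0 := by
      have := hsum v
      rwa [hinc, finsum_three' σ _ _ _ h12 h13 h23] at this
    refine ⟨s(v,a), s(v,b), s(v,c), hinc, m1, m2, m3, Sym2.mem_mk_left v a,
      Sym2.mem_mk_left v b, Sym2.mem_mk_left v c, ?_⟩
    exact keyk' hk _ _ _ ⟨hnz _ m1, hnz _ m2, hnz _ m3,
      hprop _ m1 _ m2 ⟨h12, v, Sym2.mem_mk_left v a, Sym2.mem_mk_left v b⟩,
      hprop _ m1 _ m3 ⟨h13, v, Sym2.mem_mk_left v a, Sym2.mem_mk_left v c⟩,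
      hprop _ m2 _ m3 ⟨h23, v, Sym2.mem_mk_left v b, Sym2.mem_mk_left v c⟩, hsumv⟩
  refine ⟨⟨fun e he => he.1, ?_⟩, ?_⟩
  · rintro e₁ ⟨he₁, hy₁⟩ e₂ ⟨he₂, hy₂⟩ hne ⟨v, hv₁, hv₂⟩
    obtain ⟨f₁, f₂, f₃, hinc, -, -, -, -, -, -, hD⟩ := triple v
    have hm₁ : e₁ ∈ ({f₁, f₂, f₃} : Set (Sym2 V)) := hinc ▸ (⟨he₁, hv₁⟩ : e₁ ∈ G.incidenceSet v)
    have hm₂ : e₂ ∈ ({f₁, f₂, f₃} : Set (Sym2 V)) := hinc ▸ (⟨he₂, hv₂⟩ : e₂ ∈ G.incidenceSet v)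
    simp only [Set.mem_insert_iff, Set.mem_singleton_iff] at hm₁ hm₂
    rcases hm₁ with rfl | rfl | rfl <;> rcases hm₂ with rfl | rfl | rfl <;>
      first | exact hne rfl | (rcases hD with ⟨u1, u2, u3⟩ | ⟨u1, u2, u3⟩ | ⟨u1, u2, u3⟩ <;>
        simp_all)
  · intro v
    obtain ⟨f₁, f₂, f₃, hinc, m1, m2, m3, hv1, hv2, hv3, hD⟩ := triple v
    rcases hD with ⟨u1, -, -⟩ | ⟨-, u2, -⟩ | ⟨-, -, u3⟩
    · exact ⟨f₁, ⟨m1, u1⟩, hv1⟩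
    · exact ⟨f₂, ⟨m2, u2⟩, hv2⟩
    · exact ⟨f₃, ⟨m3, u3⟩, hv3⟩
end

section
/- Let G be a snark of oddness two and F a 2-factor of G with precisely two odd cycles. Then there exists a maximum matching M in F such that H = G − M has a simple F-matching. -/
open SimpleGraph

variable {V : Type*}

/-! ### Auxiliary lemmas -/

namespace Statement5Aux

variable {V : Type*}

section WalkHelpers

variable {G : SimpleGraph V}

lemma mem_support_of_mem_edges' {a b w : V} (p : G.Walk a b) {e : Sym2 V}
    (he : e ∈ p.edges) (hw : w ∈ e) : w ∈ p.support := by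
  induction e using Sym2.ind with
  | _ x y =>
    rcases Sym2.mem_iff.1 hw with rfl | rfl
    · exact p.fst_mem_support_of_mem_edges he
    · exact p.snd_mem_support_of_mem_edges he

lemma start_edge_unique {a b : V} (p : G.Walk a b) (hp : p.IsPath) :
    ∀ e ∈ p.edges, a ∈ e → ∀ e' ∈ p.edges, a ∈ e' → e = e' := by
  cases p with
  | nil => simp
  | cons h q =>
    rename_i x
    have hq := (SimpleGraph.Walk.cons_isPath_iff _ _).1 hp
    have key : ∀ e ∈ (SimpleGraph.Walk.cons h q).edges, a ∈ e → e = s(a, x) := by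
      intro e hee hae
      rcases List.mem_cons.1 hee with rfl | he
      · rfl
      · exact absurd (mem_support_of_mem_edges' q he hae) hq.2
    intro e he hae e' he' hae'
    rw [key e he hae, key e' he' hae']

lemma end_edge_unique {a b : V} (p : G.Walk a b) (hp : p.IsPath) :
    ∀ e ∈ p.edges, b ∈ e → ∀ e' ∈ p.edges, b ∈ e' → e = e' := by
  intro e he hbe e' he' hbe'
  refine start_edge_unique p.reverse (p.isPath_reverse_iff.2 hp) e ?_ hbe e' ?_ hbe' <;>
    simpa [SimpleGraph.Walk.edges_reverse, List.mem_reverse] using ‹_›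

lemma interior_two_nbrs [DecidableEq V] {a b w : V} (p : G.Walk a b) (hp : p.IsPath)
    (hw : w ∈ p.support) (hwa : w ≠ a) (hwb : w ≠ b) :
    ∃ n₁ n₂ : V, n₁ ≠ n₂ ∧ G.Adj w n₁ ∧ G.Adj w n₂ ∧ n₁ ∈ p.support ∧ n₂ ∈ p.support ∧
      n₁ ≠ b ∧ (n₂ = b → s(w, b) ∈ p.edges) := by
  set q := p.takeUntil w hw with hqdef
  set r := p.dropUntil w hw with hrdef
  have hspec : q.append r = p := p.take_spec hw
  have hnd : (q.support ++ r.support.tail).Nodup := by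
    rw [← SimpleGraph.Walk.support_append, hspec]; exact hp.2
  obtain ⟨n₁, h1, q', hq'⟩ := SimpleGraph.Walk.exists_eq_cons_of_ne hwa q.reverse
  have hn₁q : n₁ ∈ q.support := by
    have : n₁ ∈ q.reverse.support := by rw [hq']; simp
    simpa [SimpleGraph.Walk.support_reverse] using this
  obtain ⟨n₂, h2, r', hr'⟩ := SimpleGraph.Walk.exists_eq_cons_of_ne hwb r
  have hn₂r : n₂ ∈ r.support.tail := by rw [hr']; simp
  have hbr : b ∈ r.support.tail := SimpleGraph.Walk.end_mem_tail_support_of_ne hwb r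
  have hdisj := List.disjoint_of_nodup_append hnd
  refine ⟨n₁, n₂, fun hne => hdisj (hne ▸ hn₁q) hn₂r, h1, h2, ?_, ?_,
    fun hne => hdisj (hne ▸ hn₁q) hbr, ?_⟩
  · rw [← hspec]; rw [SimpleGraph.Walk.mem_support_append_iff]; exact Or.inl hn₁q
  · rw [← hspec]; rw [SimpleGraph.Walk.mem_support_append_iff]; right
    rw [hr']; simp
  · rintro rfl
    have : s(w, n₂) ∈ r.edges := by rw [hr']; simp
    rw [← hspec, SimpleGraph.Walk.edges_append]
    exact List.mem_append_right _ this

lemma concat_isPath {a b z : V} {p : G.Walk a b} (hp : p.IsPath) (h : G.Adj b z)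
    (hz : z ∉ p.support) : (p.concat h).IsPath := by
  rw [SimpleGraph.Walk.isPath_def, SimpleGraph.Walk.support_concat]
  rw [List.nodup_append]
  refine ⟨hp.2, List.nodup_singleton z, fun a ha b hmem => ?_⟩
  rw [List.mem_singleton] at hmem
  intro hab; rw [hab, hmem] at ha; exact hz ha

lemma exists_boundary {P : V → Prop} : ∀ {x y : V} (_ : G.Walk x y), P x → ¬ P y →
    ∃ x' z, G.Adj x' z ∧ P x' ∧ ¬ P z := by
  intro x y W
  induction W with
  | nil => intro h h'; exact absurd h h'
  | @cons u m y h W ih =>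
    intro hx hy
    by_cases hm : P m
    · exact ih hm hy
    · exact ⟨_, _, h, hx, hm⟩

lemma mem_support_rotate [DecidableEq V] {u v w : V} (c : G.Walk v v) (h : u ∈ c.support) :
    w ∈ (c.rotate u h).support ↔ w ∈ c.support := by
  rw [SimpleGraph.Walk.rotate, SimpleGraph.Walk.mem_support_append_iff]
  conv_rhs => rw [← c.take_spec h]
  rw [SimpleGraph.Walk.mem_support_append_iff]
  tauto

lemma mapLe_support {G' : SimpleGraph V} (h : G ≤ G') {u v : V} (p : G.Walk u v) :
    (p.mapLe h).support = p.support := by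
  simp only [SimpleGraph.Walk.mapLe, SimpleGraph.Walk.support_map]
  have hco : ∀ x : V, (SimpleGraph.Hom.ofLE h) x = x := fun _ => rfl
  have : ∀ l : List V, List.map (⇑(SimpleGraph.Hom.ofLE h)) l = l := by
    intro l; induction l with
    | nil => rfl
    | cons a l ih => simp only [List.map_cons, ih, hco]
  exact this _

lemma mapLe_edges {G' : SimpleGraph V} (h : G ≤ G') {u v : V} (p : G.Walk u v) :
    (p.mapLe h).edges = p.edges := by
  simp only [SimpleGraph.Walk.mapLe, SimpleGraph.Walk.edges_map]
  have h2 : ∀ e : Sym2 V, Sym2.map (⇑(SimpleGraph.Hom.ofLE h)) e = e := by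
    intro e; induction e using Sym2.ind with | _ x y => rfl
  have : ∀ l : List (Sym2 V),
      List.map (Sym2.map (⇑(SimpleGraph.Hom.ofLE h))) l = l := by
    intro l; induction l with
    | nil => rfl
    | cons a l ih => simp only [List.map_cons, ih, h2]
  exact this _

lemma support_set_ncard [Fintype V] {a b : V} (q : G.Walk a b) (hq : q.IsPath) :
    {w | w ∈ q.support}.ncard = q.length + 1 := by
  classical
  have : {w | w ∈ q.support} = ↑q.support.toFinset := by
    ext w; simp
  rw [this, Set.ncard_coe_finset, List.toFinset_card_of_nodup hq.2,
    SimpleGraph.Walk.length_support]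

end WalkHelpers

section AltMatching

variable {G : SimpleGraph V}

/-- Alternate edges of a walk, starting with the first edge. -/
def altM : {a b : V} → G.Walk a b → List (Sym2 V)
  | _, _, SimpleGraph.Walk.nil => []
  | _, _, @SimpleGraph.Walk.cons _ _ a x _ _ SimpleGraph.Walk.nil => [s(a, x)]
  | _, _, @SimpleGraph.Walk.cons _ _ a x _ _ (SimpleGraph.Walk.cons h' q) => s(a, x) :: altM q

lemma altM_spec : ∀ (n : ℕ) {a b : V} (p : G.Walk a b), p.length = n → p.IsPath →
    (∀ e ∈ altM p, e ∈ p.edges) ∧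
    (∀ e₁ ∈ altM p, ∀ e₂ ∈ altM p, e₁ ≠ e₂ → ∀ w, w ∈ e₁ → w ∉ e₂) ∧
    (Odd p.length → ∀ w ∈ p.support, ∃ e ∈ altM p, w ∈ e) ∧
    (Even p.length → (∀ w ∈ p.support, w ≠ b → ∃ e ∈ altM p, w ∈ e) ∧ ∀ e ∈ altM p, b ∉ e) := by
  intro n
  induction n using Nat.strong_induction_on with
  | _ n ih =>
    intro a b p hlen hp
    cases p with
    | nil =>
      refine ⟨by simp [altM], by simp [altM], by simp, fun _ => ⟨?_, by simp [altM]⟩⟩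
      intro w hw hwb
      simp only [SimpleGraph.Walk.support_nil, List.mem_singleton] at hw
      exact absurd hw hwb
    | cons h q =>
      rename_i x
      cases q with
      | nil =>
        refine ⟨by simp [altM], ?_, ?_, ?_⟩
        · intro e₁ he₁ e₂ he₂ hne
          simp only [altM, List.mem_singleton] at he₁ he₂
          exact absurd (he₁.trans he₂.symm) hne
        · intro _ w hw
          simp only [SimpleGraph.Walk.support_cons, SimpleGraph.Walk.support_nil, List.mem_cons,
            List.mem_singleton] at hw
          refine ⟨s(a, b), by simp [altM], ?_⟩
          rcases hw with rfl | rfl | hw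
          · simp
          · simp
          · simp at hw
        · intro heven
          simp only [SimpleGraph.Walk.length_cons, SimpleGraph.Walk.length_nil] at heven
          exact absurd heven (by decide)
      | cons h' q' =>
        rename_i y
        have hp1 := (SimpleGraph.Walk.cons_isPath_iff _ _).1 hp
        have hp2 := (SimpleGraph.Walk.cons_isPath_iff _ _).1 hp1.1
        have haxs : a ∉ (SimpleGraph.Walk.cons h' q').support := hp1.2
        have hxq : x ∉ q'.support := hp2.2
        have haq : a ∉ q'.support := fun hh => haxs (by simp [hh])
        have hlq : q'.length < n := by
          simp only [SimpleGraph.Walk.length_cons] at hlen; omega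
        obtain ⟨ih1, ih2, ih3, ih4⟩ := ih q'.length hlq q' rfl hp2.1
        have haltm : altM (SimpleGraph.Walk.cons h (SimpleGraph.Walk.cons h' q')) =
            s(a, x) :: altM q' := rfl
        have hvertmem : ∀ e ∈ altM q', ∀ w, w ∈ e → w ∈ q'.support := by
          intro e he w hw
          exact mem_support_of_mem_edges' q' (ih1 e he) hw
        have hbq : b ∈ q'.support := q'.end_mem_support
        constructor
        · intro e he
          rw [haltm, List.mem_cons] at he
          rcases he with rfl | he
          · simp
          · simp only [SimpleGraph.Walk.edges_cons, List.mem_cons]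
            exact Or.inr (Or.inr (ih1 e he))
        refine ⟨?_, ?_, ?_⟩
        · intro e₁ he₁ e₂ he₂ hne w hw₁ hw₂
          rw [haltm, List.mem_cons] at he₁ he₂
          rcases he₁ with rfl | he₁ <;> rcases he₂ with rfl | he₂
          · exact hne rfl
          · have := hvertmem e₂ he₂ w hw₂
            rcases Sym2.mem_iff.1 hw₁ with rfl | rfl
            · exact haq this
            · exact hxq this
          · have := hvertmem e₁ he₁ w hw₁
            rcases Sym2.mem_iff.1 hw₂ with rfl | rfl
            · exact haq this
            · exact hxq this
          · exact ih2 e₁ he₁ e₂ he₂ hne w hw₁ hw₂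
        · intro hodd w hw
          have hodd' : Odd q'.length := by
            simp only [SimpleGraph.Walk.length_cons] at hodd
            rcases hodd with ⟨k, hk⟩
            exact ⟨k - 1, by omega⟩
          simp only [SimpleGraph.Walk.support_cons, List.mem_cons] at hw
          rcases hw with rfl | rfl | hw
          · exact ⟨s(w, x), by rw [haltm]; simp, by simp⟩
          · exact ⟨s(a, w), by rw [haltm]; simp, by simp⟩
          · obtain ⟨e, he, hwe⟩ := ih3 hodd' w hw
            exact ⟨e, by rw [haltm]; simp [he], hwe⟩
        · intro heven
          have heven' : Even q'.length := by
            simp only [SimpleGraph.Walk.length_cons] at heven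
            rcases heven with ⟨k, hk⟩
            exact ⟨k - 1, by omega⟩
          obtain ⟨ihc, ihb⟩ := ih4 heven'
          constructor
          · intro w hw hwb
            simp only [SimpleGraph.Walk.support_cons, List.mem_cons] at hw
            rcases hw with rfl | rfl | hw
            · exact ⟨s(w, x), by rw [haltm]; simp, by simp⟩
            · exact ⟨s(a, w), by rw [haltm]; simp, by simp⟩
            · obtain ⟨e, he, hwe⟩ := ihc w hw hwb
              exact ⟨e, by rw [haltm]; simp [he], hwe⟩
          · intro e he
            rw [haltm, List.mem_cons] at he
            rcases he with rfl | he
            · intro hb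
              rcases Sym2.mem_iff.1 hb with rfl | rfl
              · exact haq hbq
              · exact hxq hbq
            · exact ihb e he

end AltMatching

section TwoRegular

variable {F : SimpleGraph V}

lemma two_nbrs (hF2 : ∀ v : V, (F.neighborSet v).ncard = 2) {x y z w : V}
    (hyz : y ≠ z) (hy : F.Adj x y) (hz : F.Adj x z) (hw : F.Adj x w) : w = y ∨ w = z := by
  obtain ⟨α, β, hab, hset⟩ := Set.ncard_eq_two.1 (hF2 x)
  have hy' : y ∈ ({α, β} : Set V) := hset ▸ hy
  have hz' : z ∈ ({α, β} : Set V) := hset ▸ hz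
  have hw' : w ∈ ({α, β} : Set V) := hset ▸ hw
  simp only [Set.mem_insert_iff, Set.mem_singleton_iff] at hy' hz' hw'
  rcases hy' with rfl | rfl <;> rcases hz' with rfl | rfl <;> tauto

lemma exists_nbr (hF2 : ∀ v : V, (F.neighborSet v).ncard = 2) (x : V) :
    ∃ y, F.Adj x y := by
  have h := hF2 x
  have : (F.neighborSet x).Nonempty := Set.nonempty_of_ncard_ne_zero (by omega)
  exact this

variable [Fintype V]

lemma exists_ham_cycle (hF2 : ∀ v : V, (F.neighborSet v).ncard = 2)
    (c : F.ConnectedComponent) :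
    ∃ (t : V) (W : F.Walk t t), W.IsCycle ∧ {w | w ∈ W.support} = c.supp := by
  classical
  obtain ⟨v₀, hv₀⟩ := c.exists_rep
  set S : Set ℕ := {n : ℕ | ∃ (x y : V) (p : F.Walk x y), p.IsPath ∧
    F.connectedComponentMk x = c ∧ p.length = n} with hSdef
  have hS0 : 0 ∈ S := ⟨v₀, v₀, SimpleGraph.Walk.nil, SimpleGraph.Walk.IsPath.nil, hv₀, rfl⟩
  have hbdd : BddAbove S := by
    refine ⟨Fintype.card V, fun n hn => ?_⟩
    obtain ⟨x, y, p, hp, -, rfl⟩ := hn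
    exact le_of_lt hp.length_lt
  obtain ⟨s, t, p, hp, hsc, hlen⟩ := Nat.sSup_mem ⟨0, hS0⟩ hbdd
  have hmax : ∀ z, F.Adj t z → z ∈ p.support := by
    intro z hz
    by_contra hns
    have hp' : (p.concat hz).IsPath := concat_isPath hp hz hns
    have hmem : p.length + 1 ∈ S :=
      ⟨s, z, p.concat hz, hp', hsc, by rw [SimpleGraph.Walk.length_concat]⟩
    have := le_csSup hbdd hmem
    omega
  have hsup : ∀ w ∈ p.support, F.connectedComponentMk w = c := by
    intro w hw
    have hr : F.Reachable w s := ⟨(p.takeUntil w hw).reverse⟩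
    exact (SimpleGraph.ConnectedComponent.sound hr).trans hsc
  by_cases hst0 : s = t
  · subst hst0
    have hnil : p = SimpleGraph.Walk.nil := SimpleGraph.Walk.isPath_iff_eq_nil.1 hp
    obtain ⟨z, hz⟩ := exists_nbr hF2 s
    have := hmax z hz
    rw [hnil] at this
    simp only [SimpleGraph.Walk.support_nil, List.mem_singleton] at this
    exact absurd (this ▸ hz) (F.loopless.irrefl s)
  · obtain ⟨x₁, h₁, p₁, hpdef⟩ := SimpleGraph.Walk.exists_eq_cons_of_ne hst0 p
    have hx₁t : x₁ ≠ t := by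
      rintro rfl
      have hnil : p₁ = SimpleGraph.Walk.nil := by
        have := hp
        rw [hpdef] at this
        exact SimpleGraph.Walk.isPath_iff_eq_nil.1
          ((SimpleGraph.Walk.cons_isPath_iff _ _).1 this).1
      have hsub : F.neighborSet x₁ ⊆ {s} := by
        intro z hz
        have hzs := hmax z hz
        rw [hpdef, hnil] at hzs
        simp only [SimpleGraph.Walk.support_cons, SimpleGraph.Walk.support_nil, List.mem_cons,
          List.mem_singleton] at hzs
        rcases hzs with rfl | hzz
        · rfl
        · rcases hzz with h | h
          · exact absurd (h ▸ hz) (F.loopless.irrefl x₁)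
          · simp at h
      have := Set.ncard_le_ncard hsub (Set.finite_singleton s)
      rw [hF2 x₁, Set.ncard_singleton] at this
      omega
    have hts : F.Adj t s := by
      by_contra hst
      obtain ⟨α, β, hab, hset⟩ := Set.ncard_eq_two.1 (hF2 t)
      have key : ∀ γ, F.Adj t γ → s(γ, t) ∈ p.edges := by
        intro γ hγ
        have hγsupp : γ ∈ p.support := hmax γ hγ
        have hγs : γ ≠ s := by rintro rfl; exact hst hγ
        have hγt : γ ≠ t := fun hh => F.loopless.irrefl t (hh ▸ hγ)
        obtain ⟨n₁, n₂, hne, ha1, ha2, -, -, hn1b, hn2b⟩ :=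
          interior_two_nbrs p hp hγsupp hγs hγt
        rcases two_nbrs hF2 hne ha1 ha2 hγ.symm with rfl | rfl
        · exact absurd rfl hn1b
        · exact hn2b rfl
      have hα : F.Adj t α := by rw [← F.mem_neighborSet, hset]; simp
      have hβ : F.Adj t β := by rw [← F.mem_neighborSet, hset]; simp
      have e1 := key α hα
      have e2 := key β hβ
      have := end_edge_unique p hp _ e1 (by simp) _ e2 (by simp)
      rw [Sym2.eq_iff] at this
      rcases this with ⟨h1, -⟩ | ⟨h1, -⟩
      · exact hab h1
      · exact F.loopless.irrefl t (h1 ▸ hα)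
    have hfull : ∀ y ∈ c.supp, y ∈ p.support := by
      intro y hy
      by_contra hns
      have hry : F.Reachable s y := by
        rw [SimpleGraph.ConnectedComponent.mem_supp_iff] at hy
        exact SimpleGraph.ConnectedComponent.exact (hsc.trans hy.symm)
      obtain ⟨Wsy⟩ := hry
      obtain ⟨x', z, hadj, hx', hz⟩ := exists_boundary (P := fun w => w ∈ p.support) Wsy
        (SimpleGraph.Walk.start_mem_support p) hns
      by_cases hx't : x' = t
      · exact hz (hmax z (hx't ▸ hadj))
      by_cases hx's : x' = s
      · subst hx's
        have hx₁supp : x₁ ∈ p.support := by rw [hpdef]; simp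
        have htsupp : t ∈ p.support := SimpleGraph.Walk.end_mem_support p
        rcases two_nbrs hF2 hx₁t h₁ hts.symm hadj with rfl | rfl
        · exact hz hx₁supp
        · exact hz htsupp
      · obtain ⟨n₁, n₂, hne, ha1, ha2, hn1s, hn2s, -, -⟩ :=
          interior_two_nbrs p hp hx' hx's hx't
        rcases two_nbrs hF2 hne ha1 ha2 hadj with rfl | rfl
        · exact hz hn1s
        · exact hz hn2s
    have hnotedge : s(t, s) ∉ p.edges := by
      intro hmem
      have hfirst : s(s, x₁) ∈ p.edges := by rw [hpdef]; simp
      have := start_edge_unique p hp _ hmem (by simp) _ hfirst (by simp)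
      rw [Sym2.eq_iff] at this
      rcases this with ⟨h1, -⟩ | ⟨h1, -⟩
      · exact F.loopless.irrefl s (h1 ▸ hts)
      · exact hx₁t h1.symm
    refine ⟨t, SimpleGraph.Walk.cons hts p,
      (SimpleGraph.Walk.cons_isCycle_iff p hts).2 ⟨hp, hnotedge⟩, ?_⟩
    ext w
    simp only [Set.mem_setOf_eq, SimpleGraph.Walk.support_cons, List.mem_cons]
    constructor
    · rintro (rfl | hw)
      · rw [SimpleGraph.ConnectedComponent.mem_supp_iff]
        exact hsup w (SimpleGraph.Walk.end_mem_support p)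
      · rw [SimpleGraph.ConnectedComponent.mem_supp_iff]
        exact hsup w hw
    · intro hw
      exact Or.inr (hfull w hw)

lemma exists_ham_path_to (hF2 : ∀ v : V, (F.neighborSet v).ncard = 2)
    (c : F.ConnectedComponent) {u : V} (hu : u ∈ c.supp) :
    ∃ (x : V) (q : F.Walk x u), q.IsPath ∧ {w | w ∈ q.support} = c.supp := by
  classical
  obtain ⟨t, W0, hc, hsupp⟩ := exists_ham_cycle hF2 c
  have huW : u ∈ W0.support := by
    have : u ∈ {w | w ∈ W0.support} := hsupp ▸ hu
    exact this
  set W : F.Walk u u := W0.rotate u huW with hWdef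
  have hWc : W.IsCycle := hc.rotate huW
  have hWsupp : ∀ w, w ∈ W.support ↔ w ∈ W0.support := fun w => mem_support_rotate W0 huW
  clear_value W
  cases W with
  | nil => exact absurd rfl hWc.ne_nil
  | cons hadj q =>
    have hqp : q.IsPath := ((SimpleGraph.Walk.cons_isCycle_iff q hadj).1 hWc).1
    refine ⟨_, q, hqp, ?_⟩
    ext w
    simp only [Set.mem_setOf_eq]
    rw [← hsupp]
    simp only [Set.mem_setOf_eq]
    rw [← hWsupp w]
    simp only [SimpleGraph.Walk.support_cons, List.mem_cons]
    constructor
    · exact fun h => Or.inr h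
    · rintro (rfl | h)
      · exact q.end_mem_support
      · exact h

lemma comp_matching (hF2 : ∀ v : V, (F.neighborSet v).ncard = 2)
    (c : F.ConnectedComponent) {u : V} (hu : u ∈ c.supp) :
    ∃ Mc : Set (Sym2 V),
      (∀ e ∈ Mc, e ∈ F.edgeSet) ∧
      (∀ e ∈ Mc, ∀ w, w ∈ e → w ∈ c.supp) ∧
      (∀ e₁ ∈ Mc, ∀ e₂ ∈ Mc, e₁ ≠ e₂ → ∀ w, w ∈ e₁ → w ∉ e₂) ∧
      (∀ w ∈ c.supp, w ≠ u → ∃ e ∈ Mc, w ∈ e) ∧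
      (Even c.supp.ncard → ∃ e ∈ Mc, u ∈ e) ∧
      (Odd c.supp.ncard → ∀ e ∈ Mc, u ∉ e) := by
  classical
  obtain ⟨x, q, hq, hsupp⟩ := exists_ham_path_to hF2 c hu
  obtain ⟨hsub, hpair, hodd, heven⟩ := altM_spec q.length q rfl hq
  have hncard : c.supp.ncard = q.length + 1 := by rw [← hsupp, support_set_ncard q hq]
  have hmemsupp : ∀ w, w ∈ c.supp ↔ w ∈ q.support := by
    intro w; rw [← hsupp]; rfl
  refine ⟨{e | e ∈ altM q}, fun e he => q.edges_subset_edgeSet (hsub e he), ?_, hpair,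
    ?_, ?_, ?_⟩
  · intro e he w hw
    exact (hmemsupp w).2 (mem_support_of_mem_edges' q (hsub e he) hw)
  · intro w hw hwu
    rcases Nat.even_or_odd q.length with he | ho
    · exact (heven he).1 w ((hmemsupp w).1 hw) hwu
    · exact hodd ho w ((hmemsupp w).1 hw)
  · intro hev
    have ho : Odd q.length := by
      rw [hncard] at hev
      rcases hev with ⟨k, hk⟩
      exact ⟨k - 1, by omega⟩
    exact hodd ho u ((hmemsupp u).1 hu)
  · intro hodd' e he
    have hevq : Even q.length := by
      rw [hncard] at hodd'
      rcases hodd' with ⟨k, hk⟩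
      exact ⟨k, by omega⟩
    exact (heven hevq).2 e he

end TwoRegular

section Misc

variable {G F : SimpleGraph V}

lemma edge_decomp {e : Sym2 V} (he : e ∈ F.edgeSet) {w : V} (hw : w ∈ e) :
    ∃ pw, e = s(w, pw) ∧ F.Adj w pw := by
  induction e using Sym2.ind with
  | _ x y =>
    rw [SimpleGraph.mem_edgeSet] at he
    rcases Sym2.mem_iff.1 hw with rfl | rfl
    · exact ⟨y, rfl, he⟩
    · exact ⟨x, Sym2.eq_swap, he.symm⟩

lemma edge_same_comp {e : Sym2 V} (he : e ∈ F.edgeSet) {w w' : V} (hw : w ∈ e) (hw' : w' ∈ e) :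
    F.connectedComponentMk w = F.connectedComponentMk w' := by
  induction e using Sym2.ind with
  | _ x y =>
    rw [SimpleGraph.mem_edgeSet] at he
    rcases Sym2.mem_iff.1 hw with rfl | rfl <;> rcases Sym2.mem_iff.1 hw' with rfl | rfl
    · rfl
    · exact SimpleGraph.ConnectedComponent.sound he.reachable
    · exact SimpleGraph.ConnectedComponent.sound he.symm.reachable
    · rfl

lemma supp_disjoint {c c' : F.ConnectedComponent} (h : c ≠ c') {w : V}
    (hw : w ∈ c.supp) (hw' : w ∈ c'.supp) : False := by
  rw [SimpleGraph.ConnectedComponent.mem_supp_iff] at hw hw'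
  exact h (hw ▸ hw' ▸ rfl)

lemma deleteEdges_nbr_of_uncovered {M : Set (Sym2 V)} {w : V} (hw : ∀ e ∈ M, w ∉ e) :
    (G.deleteEdges M).neighborSet w = G.neighborSet w := by
  ext x
  simp only [SimpleGraph.mem_neighborSet, SimpleGraph.deleteEdges_adj]
  exact ⟨fun h => h.1, fun h => ⟨h, fun hm => hw _ hm (Sym2.mem_mk_left w x)⟩⟩

lemma deleteEdges_nbr_of_covered {M : Set (Sym2 V)} (hMG : M ⊆ G.edgeSet)
    (hpair : ∀ e₁ ∈ M, ∀ e₂ ∈ M, e₁ ≠ e₂ → ∀ w, w ∈ e₁ → w ∉ e₂)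
    {e : Sym2 V} (he : e ∈ M) {w : V} (hw : w ∈ e) :
    ∃ pw, G.Adj w pw ∧ e = s(w, pw) ∧
      (G.deleteEdges M).neighborSet w = G.neighborSet w \ {pw} := by
  obtain ⟨pw, rfl, hadj⟩ := edge_decomp (hMG he) hw
  refine ⟨pw, hadj, rfl, ?_⟩
  ext x
  simp only [SimpleGraph.mem_neighborSet, SimpleGraph.deleteEdges_adj, Set.mem_diff,
    Set.mem_singleton_iff]
  constructor
  · rintro ⟨hgx, hnm⟩
    refine ⟨hgx, fun hxp => hnm (hxp ▸ he)⟩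
  · rintro ⟨hgx, hxp⟩
    refine ⟨hgx, fun hm => ?_⟩
    by_cases heq : s(w, x) = s(w, pw)
    · rw [Sym2.congr_right] at heq
      exact hxp heq
    · exact hpair _ hm _ he heq w (Sym2.mem_mk_left w x) (Sym2.mem_mk_left w pw)

lemma matching_cover_ncard [Fintype V] {N : Set (Sym2 V)} (hsub : N ⊆ G.edgeSet)
    (hpair : ∀ e₁ ∈ N, ∀ e₂ ∈ N, e₁ ≠ e₂ → ∀ w, w ∈ e₁ → w ∉ e₂) :
    {w | ∃ e ∈ N, w ∈ e}.ncard = 2 * N.ncard := by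
  classical
  set Nf : Finset (Sym2 V) := N.toFinite.toFinset with hNf
  have hNmem : ∀ e, e ∈ Nf ↔ e ∈ N := fun e => Set.Finite.mem_toFinset _
  set tf : Sym2 V → Finset V := fun e => ({w | w ∈ e} : Set V).toFinite.toFinset with htf
  have htfmem : ∀ e w, w ∈ tf e ↔ w ∈ e := by
    intro e w; rw [htf]; simp [Set.Finite.mem_toFinset]
  have htfcard : ∀ e ∈ N, (tf e).card = 2 := by
    intro e he
    induction e using Sym2.ind with
    | _ x y =>
      have hxy : x ≠ y := (G.not_isDiag_of_mem_edgeSet (hsub he)) ∘ Sym2.mk_isDiag_iff.2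
      have : (tf s(x, y) : Set V) = {x, y} := by
        ext w
        simp only [Finset.mem_coe]
        rw [htfmem]
        simp [Sym2.mem_iff]
      have h2 : (tf s(x, y)).card = ({x, y} : Set V).ncard := by
        rw [← Set.ncard_coe_finset, this]
      rw [h2, Set.ncard_pair hxy]
  have hcover : {w | ∃ e ∈ N, w ∈ e} = ↑(Nf.biUnion tf) := by
    ext w
    simp only [Set.mem_setOf_eq, Finset.coe_biUnion, Set.mem_iUnion, Finset.mem_coe]
    constructor
    · rintro ⟨e, he, hwe⟩
      exact ⟨e, (hNmem e).2 he, (htfmem e w).2 hwe⟩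
    · rintro ⟨e, he, hwe⟩
      exact ⟨e, (hNmem e).1 he, (htfmem e w).1 hwe⟩
  have hdisj : ∀ e₁ ∈ Nf, ∀ e₂ ∈ Nf, e₁ ≠ e₂ → Disjoint (tf e₁) (tf e₂) := by
    intro e₁ h₁ e₂ h₂ hne
    rw [Finset.disjoint_left]
    intro w hw₁ hw₂
    exact hpair e₁ ((hNmem _).1 h₁) e₂ ((hNmem _).1 h₂) hne w ((htfmem _ _).1 hw₁)
      ((htfmem _ _).1 hw₂)
  rw [hcover, Set.ncard_coe_finset, Finset.card_biUnion hdisj]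
  have : ∀ e ∈ Nf, (tf e).card = 2 := fun e he => htfcard e ((hNmem e).1 he)
  rw [Finset.sum_congr rfl this, Finset.sum_const, smul_eq_mul]
  have : N.ncard = Nf.card := Set.ncard_eq_toFinset_card _ _
  omega

lemma comp_handshake [Fintype V] (K : SimpleGraph V) (X : K.ConnectedComponent) :
    Even {w ∈ X.supp | Odd (K.neighborSet w).ncard}.ncard := by
  classical
  set s : Set V := X.supp with hs
  haveI : Fintype ↥s := Fintype.ofFinite _
  set K' : SimpleGraph ↥s := SimpleGraph.induce s K with hK'
  haveI : DecidableRel K'.Adj := Classical.decRel _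
  have hdeg : ∀ v : ↥s, K'.degree v = (K.neighborSet v.1).ncard := by
    intro v
    have hclosed : ∀ y, K.Adj v.1 y → y ∈ s := by
      intro y hy
      have hv : K.connectedComponentMk v.1 = X :=
        (SimpleGraph.ConnectedComponent.mem_supp_iff _ _).1 v.2
      rw [hs]
      rw [SimpleGraph.ConnectedComponent.mem_supp_iff]
      rw [← hv]
      exact SimpleGraph.ConnectedComponent.sound hy.symm.reachable
    have hequiv : K'.neighborSet v ≃ K.neighborSet v.1 :=
      { toFun := fun x => ⟨x.1.1, x.2⟩
        invFun := fun y => ⟨⟨y.1, hclosed y.1 y.2⟩, y.2⟩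
        left_inv := fun x => by ext; rfl
        right_inv := fun y => rfl }
    rw [← SimpleGraph.card_neighborSet_eq_degree]
    rw [Set.ncard_eq_toFinset_card']
    rw [Set.toFinset_card]
    exact Fintype.card_congr hequiv
  have hmain := K'.even_card_odd_degree_vertices
  have hcardeq : {w ∈ X.supp | Odd (K.neighborSet w).ncard}.ncard =
      (Finset.univ.filter fun v : ↥s => Odd (K'.degree v)).card := by
    have himg : {w ∈ X.supp | Odd (K.neighborSet w).ncard} =
        Subtype.val '' {v : ↥s | Odd (K'.degree v)} := by
      ext w
      simp only [Set.mem_setOf_eq, Set.mem_image]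
      constructor
      · rintro ⟨hw, hodd⟩
        exact ⟨⟨w, hw⟩, by rw [hdeg]; exact hodd, rfl⟩
      · rintro ⟨v, hv, rfl⟩
        rw [hdeg] at hv
        exact ⟨v.2, hv⟩
    rw [himg, Set.ncard_image_of_injective _ Subtype.val_injective]
    rw [Set.ncard_eq_toFinset_card']
    rw [Set.toFinset_setOf]
  rw [hcardeq]
  exact hmain

end Misc

end Statement5Aux

-- STATEMENT 5
theorem statement5 {V : Type*} [Fintype V] (G F : SimpleGraph V)
    (hG : IsSnark G) (hodd : oddness G = 2)
    (hF : IsTwoFactor G F) (hFodd : oddCompCount F = 2) :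
    ∃ M : Set (Sym2 V), IsMaximumMatchingIn M F ∧
      ∃ Ps : Set (FPathIn (G.deleteEdges M) F),
        IsSimpleFMatching (G.deleteEdges M) F Ps := by
  classical
  obtain ⟨hFle, hF2⟩ := hF
  have hcubic : ∀ w : V, (G.neighborSet w).ncard = 3 := hG.2.2.1
  -- the two odd components
  have hFodd' : {c : F.ConnectedComponent | Odd c.supp.ncard}.ncard = 2 := hFodd
  obtain ⟨C1, C2, hC12, hOset⟩ := Set.ncard_eq_two.1 hFodd'
  have hC1odd : Odd C1.supp.ncard := by
    have : C1 ∈ {c : F.ConnectedComponent | Odd c.supp.ncard} := by rw [hOset]; simp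
    exact this
  have hC2odd : Odd C2.supp.ncard := by
    have : C2 ∈ {c : F.ConnectedComponent | Odd c.supp.ncard} := by rw [hOset]; simp
    exact this
  have hoddcomp : ∀ c : F.ConnectedComponent, Odd c.supp.ncard ↔ (c = C1 ∨ c = C2) := by
    intro c
    constructor
    · intro h
      have : c ∈ {c : F.ConnectedComponent | Odd c.supp.ncard} := h
      rw [hOset] at this
      simpa using this
    · rintro (rfl | rfl)
      · exact hC1odd
      · exact hC2odd
  have honodd : ∀ w : V, OnOddCycle F w ↔ (w ∈ C1.supp ∨ w ∈ C2.supp) := by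
    intro w
    constructor
    · intro h
      rcases (hoddcomp _).1 h with h1 | h1
      · exact Or.inl ((SimpleGraph.ConnectedComponent.mem_supp_iff _ _).2 h1)
      · exact Or.inr ((SimpleGraph.ConnectedComponent.mem_supp_iff _ _).2 h1)
    · rintro (h1 | h1)
      · exact (hoddcomp _).2 (Or.inl ((SimpleGraph.ConnectedComponent.mem_supp_iff _ _).1 h1))
      · exact (hoddcomp _).2 (Or.inr ((SimpleGraph.ConnectedComponent.mem_supp_iff _ _).1 h1))
  -- matchings on every component
  have hrep : ∀ c : F.ConnectedComponent, ∃ w, w ∈ c.supp := by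
    intro c
    obtain ⟨w, hw⟩ := c.exists_rep
    exact ⟨w, (SimpleGraph.ConnectedComponent.mem_supp_iff _ _).2 hw⟩
  choose u0 hu0 using hrep
  have hpkg := fun c : F.ConnectedComponent => Statement5Aux.comp_matching hF2 c (hu0 c)
  choose Mc0 hMc0F hMc0supp hMc0pair hMc0cov hMc0even hMc0odd using hpkg
  set Meven : Set (Sym2 V) :=
    {e | ∃ c : F.ConnectedComponent, ¬ Odd c.supp.ncard ∧ e ∈ Mc0 c} with hMevendef
  have hMevF : ∀ e ∈ Meven, e ∈ F.edgeSet := by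
    rintro e ⟨c, -, he⟩
    exact hMc0F c e he
  have hMevNotOdd : ∀ e ∈ Meven, ∀ w, w ∈ e → ¬ OnOddCycle F w := by
    rintro e ⟨c, hc, he⟩ w hw hoddw
    have hsupp := hMc0supp c e he w hw
    rw [SimpleGraph.ConnectedComponent.mem_supp_iff] at hsupp
    have hoddw' : Odd ((F.connectedComponentMk w).supp.ncard) := hoddw
    rw [hsupp] at hoddw'
    exact hc hoddw'
  have hMevPair : ∀ e₁ ∈ Meven, ∀ e₂ ∈ Meven, e₁ ≠ e₂ → ∀ w, w ∈ e₁ → w ∉ e₂ := by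
    rintro e₁ ⟨c₁, hc₁, he₁⟩ e₂ ⟨c₂, hc₂, he₂⟩ hne w hw₁ hw₂
    by_cases hcc : c₁ = c₂
    · subst hcc
      exact hMc0pair c₁ e₁ he₁ e₂ he₂ hne w hw₁ hw₂
    · exact Statement5Aux.supp_disjoint hcc (hMc0supp c₁ e₁ he₁ w hw₁)
        (hMc0supp c₂ e₂ he₂ w hw₂)
  have hMevCover : ∀ w, ¬ OnOddCycle F w → ∃ e ∈ Meven, w ∈ e := by
    intro w hw
    set c := F.connectedComponentMk w with hcdef
    have hwc : w ∈ c.supp := (SimpleGraph.ConnectedComponent.mem_supp_iff _ _).2 rfl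
    have hceven : ¬ Odd c.supp.ncard := by rw [hcdef]; exact hw
    by_cases hwu : w = u0 c
    · obtain ⟨e, he, hue⟩ := hMc0even c (Nat.not_odd_iff_even.1 hceven)
      exact ⟨e, ⟨c, hceven, he⟩, by rw [hwu]; exact hue⟩
    · obtain ⟨e, he, hwe⟩ := hMc0cov c w hwc hwu
      exact ⟨e, ⟨c, hceven, he⟩, hwe⟩
  have hMevUniq : ∀ w, ∀ e₁ ∈ Meven, ∀ e₂ ∈ Meven, w ∈ e₁ → w ∈ e₂ → e₁ = e₂ := by
    intro w e₁ h₁ e₂ h₂ hw₁ hw₂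
    by_contra hne
    exact hMevPair e₁ h₁ e₂ h₂ hne w hw₁ hw₂
  -- the auxiliary graph K
  set Fodde : Set (Sym2 V) := {e | e ∈ F.edgeSet ∧ ∀ w ∈ e, OnOddCycle F w} with hFoddedef
  set K : SimpleGraph V := G.deleteEdges (Fodde ∪ Meven) with hKdef
  have hKnbr_odd : ∀ w, OnOddCycle F w → (K.neighborSet w).ncard = 1 := by
    intro w hw
    have hset : K.neighborSet w = G.neighborSet w \ F.neighborSet w := by
      ext x
      simp only [hKdef, SimpleGraph.mem_neighborSet, SimpleGraph.deleteEdges_adj,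
        Set.mem_diff, Set.mem_union]
      constructor
      · rintro ⟨hg, hnot⟩
        refine ⟨hg, fun hf => hnot (Or.inl ⟨?_, ?_⟩)⟩
        · exact (F.mem_edgeSet).2 hf
        · intro y hy
          rcases Sym2.mem_iff.1 hy with rfl | rfl
          · exact hw
          · have hmk := SimpleGraph.ConnectedComponent.sound hf.symm.reachable
            show Odd ((F.connectedComponentMk y).supp.ncard)
            rw [hmk]
            exact hw
      · rintro ⟨hg, hnf⟩
        refine ⟨hg, ?_⟩
        rintro (hfo | hme)
        · exact hnf ((F.mem_edgeSet).1 hfo.1)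
        · exact hnf ((F.mem_edgeSet).1 (hMevF _ hme))
    have hsubn : F.neighborSet w ⊆ G.neighborSet w := fun x hx => hFle hx
    rw [hset, Set.ncard_diff hsubn (Set.toFinite _), hcubic w, hF2 w]
  have hKnbr_even : ∀ w, ¬ OnOddCycle F w → (K.neighborSet w).ncard = 2 := by
    intro w hw
    obtain ⟨e, he, hwe⟩ := hMevCover w hw
    obtain ⟨pw, hedec, hpadj⟩ := Statement5Aux.edge_decomp (hMevF e he) hwe
    have hset : K.neighborSet w = G.neighborSet w \ {pw} := by
      ext x
      simp only [hKdef, SimpleGraph.mem_neighborSet, SimpleGraph.deleteEdges_adj,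
        Set.mem_diff, Set.mem_singleton_iff, Set.mem_union]
      constructor
      · rintro ⟨hg, hnot⟩
        refine ⟨hg, fun hxp => hnot (Or.inr ?_)⟩
        rw [hxp, ← hedec]
        exact he
      · rintro ⟨hg, hxp⟩
        refine ⟨hg, ?_⟩
        rintro (hfo | hme)
        · exact hw (hfo.2 w (Sym2.mem_mk_left w x))
        · have := hMevUniq w _ hme _ he (Sym2.mem_mk_left w x) hwe
          rw [hedec, Sym2.congr_right] at this
          exact hxp this
    have hpmem : pw ∈ G.neighborSet w := hFle hpadj
    rw [hset, Set.ncard_diff_singleton_of_mem hpmem, hcubic w]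
  have hKdegodd : ∀ w, Odd (K.neighborSet w).ncard ↔ OnOddCycle F w := by
    intro w
    by_cases hw : OnOddCycle F w
    · rw [hKnbr_odd w hw]
      exact ⟨fun _ => hw, fun _ => ⟨0, rfl⟩⟩
    · rw [hKnbr_even w hw]
      exact ⟨fun h => absurd h (by decide), fun h => absurd h hw⟩
  -- linking the two odd components through K
  have hlink : ∃ x y : V, x ∈ C1.supp ∧ y ∈ C2.supp ∧ K.Reachable x y := by
    by_contra hcon
    push_neg at hcon
    haveI : DecidableEq K.ConnectedComponent := Classical.decEq _
    haveI : Fintype K.ConnectedComponent :=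
      Fintype.ofSurjective K.connectedComponentMk (fun c => c.exists_rep)
    set C1f : Finset V := C1.supp.toFinite.toFinset with hC1f
    have hmemC1f : ∀ w, w ∈ C1f ↔ w ∈ C1.supp := fun w => Set.Finite.mem_toFinset _
    have hcardsum : C1f.card = ∑ X ∈ (Finset.univ : Finset K.ConnectedComponent),
        (C1f.filter (fun w => K.connectedComponentMk w = X)).card :=
      Finset.card_eq_sum_card_fiberwise (fun x _ => Finset.mem_univ _)
    have hevenX : ∀ X : K.ConnectedComponent,
        Even (C1f.filter (fun w => K.connectedComponentMk w = X)).card := by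
      intro X
      by_cases hX : ∃ w₀, w₀ ∈ C1.supp ∧ K.connectedComponentMk w₀ = X
      · obtain ⟨w₀, hw₀C1, hw₀X⟩ := hX
        have h2 := Statement5Aux.comp_handshake K X
        have hsetEq : {w ∈ X.supp | Odd (K.neighborSet w).ncard} =
            ↑(C1f.filter (fun w => K.connectedComponentMk w = X)) := by
          ext w
          rw [Finset.coe_filter]
          simp only [Set.mem_setOf_eq, hmemC1f]
          constructor
          · rintro ⟨hwX, hwodd⟩
            rw [hKdegodd] at hwodd
            rw [honodd] at hwodd
            rcases hwodd with hw1 | hw2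
            · exact ⟨hw1, (SimpleGraph.ConnectedComponent.mem_supp_iff _ _).1 hwX⟩
            · exfalso
              refine hcon w₀ w hw₀C1 hw2 ?_
              apply SimpleGraph.ConnectedComponent.exact
              rw [hw₀X, ← (SimpleGraph.ConnectedComponent.mem_supp_iff _ _).1 hwX]
          · rintro ⟨hw1, hmk⟩
            refine ⟨(SimpleGraph.ConnectedComponent.mem_supp_iff _ _).2 hmk, ?_⟩
            rw [hKdegodd, honodd]
            exact Or.inl hw1
        rw [hsetEq, Set.ncard_coe_finset] at h2
        exact h2
      · have hempty : (C1f.filter (fun w => K.connectedComponentMk w = X)) = ∅ := by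
          rw [Finset.filter_eq_empty_iff]
          intro w hw hmk
          exact hX ⟨w, (hmemC1f w).1 hw, hmk⟩
        rw [hempty]
        simp
    have hevensum : Even C1f.card := by
      rw [hcardsum]
      exact Finset.even_sum _ (fun X _ => hevenX X)
    have hceq : C1f.card = C1.supp.ncard := (Set.ncard_eq_toFinset_card _ _).symm
    rw [hceq] at hevensum
    exact (Nat.not_odd_iff_even.2 hevensum) hC1odd
  obtain ⟨a, b, haC1, hbC2, hreach⟩ := hlink
  -- end vertices u, v
  obtain ⟨u, hau⟩ := Statement5Aux.exists_nbr hF2 a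
  obtain ⟨v, hbv⟩ := Statement5Aux.exists_nbr hF2 b
  have huC1 : u ∈ C1.supp := by
    rw [SimpleGraph.ConnectedComponent.mem_supp_iff]
    rw [← (SimpleGraph.ConnectedComponent.mem_supp_iff _ _).1 haC1]
    exact SimpleGraph.ConnectedComponent.sound hau.symm.reachable
  have hvC2 : v ∈ C2.supp := by
    rw [SimpleGraph.ConnectedComponent.mem_supp_iff]
    rw [← (SimpleGraph.ConnectedComponent.mem_supp_iff _ _).1 hbC2]
    exact SimpleGraph.ConnectedComponent.sound hbv.symm.reachable
  obtain ⟨McU, hUF, hUsupp, hUpair, hUcov, hUeven, hUodd⟩ :=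
    Statement5Aux.comp_matching hF2 C1 huC1
  obtain ⟨McV, hVF, hVsupp, hVpair, hVcov, hVeven, hVodd⟩ :=
    Statement5Aux.comp_matching hF2 C2 hvC2
  set M : Set (Sym2 V) := Meven ∪ (McU ∪ McV) with hMdef
  have hMF : ∀ e ∈ M, e ∈ F.edgeSet := by
    rintro e (he | he | he)
    · exact hMevF e he
    · exact hUF e he
    · exact hVF e he
  have hMpair : ∀ e₁ ∈ M, ∀ e₂ ∈ M, e₁ ≠ e₂ → ∀ w, w ∈ e₁ → w ∉ e₂ := by
    rintro e₁ (h₁ | h₁ | h₁) e₂ (h₂ | h₂ | h₂) hne w hw₁ hw₂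
    · exact hMevPair e₁ h₁ e₂ h₂ hne w hw₁ hw₂
    · exact hMevNotOdd e₁ h₁ w hw₁ ((honodd w).2 (Or.inl (hUsupp e₂ h₂ w hw₂)))
    · exact hMevNotOdd e₁ h₁ w hw₁ ((honodd w).2 (Or.inr (hVsupp e₂ h₂ w hw₂)))
    · exact hMevNotOdd e₂ h₂ w hw₂ ((honodd w).2 (Or.inl (hUsupp e₁ h₁ w hw₁)))
    · exact hUpair e₁ h₁ e₂ h₂ hne w hw₁ hw₂
    · exact Statement5Aux.supp_disjoint hC12 (hUsupp e₁ h₁ w hw₁) (hVsupp e₂ h₂ w hw₂)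
    · exact hMevNotOdd e₂ h₂ w hw₂ ((honodd w).2 (Or.inr (hVsupp e₁ h₁ w hw₁)))
    · exact Statement5Aux.supp_disjoint hC12 (hUsupp e₂ h₂ w hw₂) (hVsupp e₁ h₁ w hw₁)
    · exact hVpair e₁ h₁ e₂ h₂ hne w hw₁ hw₂
  have hMcover : ∀ w : V, w ≠ u → w ≠ v → ∃ e ∈ M, w ∈ e := by
    intro w hwu hwv
    by_cases hw : OnOddCycle F w
    · rcases (honodd w).1 hw with h1 | h1
      · obtain ⟨e, he, hwe⟩ := hUcov w h1 hwu
        exact ⟨e, Or.inr (Or.inl he), hwe⟩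
      · obtain ⟨e, he, hwe⟩ := hVcov w h1 hwv
        exact ⟨e, Or.inr (Or.inr he), hwe⟩
    · obtain ⟨e, he, hwe⟩ := hMevCover w hw
      exact ⟨e, Or.inl he, hwe⟩
  have huodd : OnOddCycle F u := (honodd u).2 (Or.inl huC1)
  have hvodd : OnOddCycle F v := (honodd v).2 (Or.inr hvC2)
  have hMmissu : ∀ e ∈ M, u ∉ e := by
    rintro e (he | he | he) hue
    · exact hMevNotOdd e he u hue huodd
    · exact hUodd hC1odd e he hue
    · exact Statement5Aux.supp_disjoint hC12 huC1 (hVsupp e he u hue)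
  have hMmissv : ∀ e ∈ M, v ∉ e := by
    rintro e (he | he | he) hve
    · exact hMevNotOdd e he v hve hvodd
    · exact Statement5Aux.supp_disjoint hC12 (hUsupp e he v hve) hvC2
    · exact hVodd hC2odd e he hve
  have huv : u ≠ v := fun h => Statement5Aux.supp_disjoint hC12 huC1 (by rw [h]; exact hvC2)
  have hMG : M ⊆ G.edgeSet := fun e he => (SimpleGraph.edgeSet_mono hFle) (hMF e he)
  have hcoverset : {w | ∃ e ∈ M, w ∈ e} = Set.univ \ {u, v} := by
    ext w
    simp only [Set.mem_setOf_eq, Set.mem_diff, Set.mem_univ, Set.mem_insert_iff,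
      Set.mem_singleton_iff, true_and]
    constructor
    · rintro ⟨e, he, hwe⟩
      push_neg
      exact ⟨fun h => hMmissu e he (h ▸ hwe), fun h => hMmissv e he (h ▸ hwe)⟩
    · intro h
      push_neg at h
      exact hMcover w h.1 h.2
  have hcount : 2 * M.ncard = Fintype.card V - 2 := by
    rw [← Statement5Aux.matching_cover_ncard hMG hMpair, hcoverset]
    rw [Set.ncard_diff (Set.subset_univ _) (Set.toFinite _), Set.ncard_univ,
      Set.ncard_pair huv, Nat.card_eq_fintype_card]
  have hmaxM : ∀ M' : Set (Sym2 V), IsMatchingIn M' F → M'.ncard ≤ M.ncard := by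
    intro M' hM'
    obtain ⟨hM'F, hM'p⟩ := hM'
    have hM'pair : ∀ e₁ ∈ M', ∀ e₂ ∈ M', e₁ ≠ e₂ → ∀ w, w ∈ e₁ → w ∉ e₂ := by
      intro e₁ h₁ e₂ h₂ hne w hw₁ hw₂
      exact hM'p e₁ h₁ e₂ h₂ hne ⟨w, hw₁, hw₂⟩
    have hmiss : ∀ (C : F.ConnectedComponent), Odd C.supp.ncard →
        ∃ w ∈ C.supp, ∀ e ∈ M', w ∉ e := by
      intro C hCodd
      by_contra hall
      push_neg at hall
      set N : Set (Sym2 V) := {e | e ∈ M' ∧ ∃ w, w ∈ e ∧ w ∈ C.supp} with hNdef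
      have hNsub : N ⊆ G.edgeSet := fun e he => (SimpleGraph.edgeSet_mono hFle) (hM'F he.1)
      have hNpair : ∀ e₁ ∈ N, ∀ e₂ ∈ N, e₁ ≠ e₂ → ∀ w, w ∈ e₁ → w ∉ e₂ :=
        fun e₁ h₁ e₂ h₂ hne => hM'pair e₁ h₁.1 e₂ h₂.1 hne
      have hNcover : {w | ∃ e ∈ N, w ∈ e} = C.supp := by
        ext w
        simp only [Set.mem_setOf_eq]
        constructor
        · rintro ⟨e, ⟨heM, w', hw'e, hw'C⟩, hwe⟩
          rw [SimpleGraph.ConnectedComponent.mem_supp_iff]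
          rw [← (SimpleGraph.ConnectedComponent.mem_supp_iff _ _).1 hw'C]
          exact Statement5Aux.edge_same_comp (hM'F heM) hwe hw'e
        · intro hwC
          obtain ⟨e, he, hwe⟩ := hall w hwC
          exact ⟨e, ⟨he, w, hwe, hwC⟩, hwe⟩
      have hcnt := Statement5Aux.matching_cover_ncard hNsub hNpair
      rw [hNcover] at hcnt
      rw [hcnt] at hCodd
      exact (Nat.not_odd_iff_even.2 (even_two_mul _)) hCodd
    obtain ⟨w₁, hw₁C, hw₁m⟩ := hmiss C1 hC1odd
    obtain ⟨w₂, hw₂C, hw₂m⟩ := hmiss C2 hC2odd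
    have hw12 : w₁ ≠ w₂ := fun h =>
      Statement5Aux.supp_disjoint hC12 hw₁C (by rw [h]; exact hw₂C)
    have hsub : {w | ∃ e ∈ M', w ∈ e} ⊆ Set.univ \ {w₁, w₂} := by
      rintro w ⟨e, he, hwe⟩
      refine ⟨Set.mem_univ _, ?_⟩
      simp only [Set.mem_insert_iff, Set.mem_singleton_iff]
      push_neg
      exact ⟨fun h => hw₁m e he (h ▸ hwe), fun h => hw₂m e he (h ▸ hwe)⟩
    have h1 := Statement5Aux.matching_cover_ncard
      (fun e he => (SimpleGraph.edgeSet_mono hFle) (hM'F he)) hM'pair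
    have h2 := Set.ncard_le_ncard hsub (Set.toFinite _)
    rw [h1] at h2
    rw [Set.ncard_diff (Set.subset_univ _) (Set.toFinite _), Set.ncard_univ,
      Set.ncard_pair hw12, Nat.card_eq_fintype_card] at h2
    omega
  -- the graph H and the path
  set H : SimpleGraph V := G.deleteEdges M with hHdef
  have hle : K ≤ H := by
    intro x y hxy
    rw [hKdef, SimpleGraph.deleteEdges_adj] at hxy
    rw [hHdef, SimpleGraph.deleteEdges_adj]
    refine ⟨hxy.1, ?_⟩
    rintro (hme | hmu | hmv)
    · exact hxy.2 (Or.inr hme)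
    · exact hxy.2 (Or.inl ⟨hUF _ hmu, fun w hw => (honodd w).2 (Or.inl (hUsupp _ hmu w hw))⟩)
    · exact hxy.2 (Or.inl ⟨hVF _ hmv, fun w hw => (honodd w).2 (Or.inr (hVsupp _ hmv w hw))⟩)
  obtain ⟨qw⟩ := hreach
  set q : K.Walk a b := qw.toPath.1 with hqdef
  have hqp : q.IsPath := qw.toPath.2
  have hqint : ∀ w ∈ q.support, w ≠ a → w ≠ b → ¬ OnOddCycle F w := by
    intro w hw hwa hwb hwodd
    obtain ⟨n₁, n₂, hne, h1, h2, -, -, -, -⟩ :=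
      Statement5Aux.interior_two_nbrs q hqp hw hwa hwb
    have hsubn : ({n₁, n₂} : Set V) ⊆ K.neighborSet w := by
      intro z hz
      rcases hz with rfl | hz
      · exact h1
      · rw [Set.mem_singleton_iff] at hz
        rw [hz]
        exact h2
    have hge := Set.ncard_le_ncard hsubn (Set.toFinite _)
    rw [Set.ncard_pair hne, hKnbr_odd w hwodd] at hge
    omega
  have hua : u ≠ a := hau.ne'
  have hvb : v ≠ b := hbv.ne'
  have hunotq : u ∉ q.support := by
    intro hu
    by_cases h1 : u = a
    · exact hua h1
    by_cases h2 : u = b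
    · exact Statement5Aux.supp_disjoint hC12 huC1 (by rw [h2]; exact hbC2)
    · exact hqint u hu h1 h2 huodd
  have hvnotq : v ∉ q.support := by
    intro hv
    by_cases h1 : v = b
    · exact hvb h1
    by_cases h2 : v = a
    · exact Statement5Aux.supp_disjoint hC12 (by rw [h2]; exact haC1) hvC2
    · exact hqint v hv h2 h1 hvodd
  set qH : H.Walk a b := q.mapLe hle with hqHdef
  have hqHsupp : qH.support = q.support := Statement5Aux.mapLe_support hle q
  have hqHedges : qH.edges = q.edges := Statement5Aux.mapLe_edges hle q
  have hqHp : qH.IsPath := hqp.mapLe hle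
  have hHua : H.Adj u a := by
    rw [hHdef, SimpleGraph.deleteEdges_adj]
    exact ⟨hFle hau.symm, fun hm => hMmissu _ hm (Sym2.mem_mk_left u a)⟩
  have hHbv : H.Adj b v := by
    rw [hHdef, SimpleGraph.deleteEdges_adj]
    exact ⟨hFle hbv, fun hm => hMmissv _ hm (Sym2.mem_mk_right b v)⟩
  set W2 : H.Walk a v := qH.concat hHbv with hW2def
  set Wfull : H.Walk u v := SimpleGraph.Walk.cons hHua W2 with hWfulldef
  have hWsupp : Wfull.support = u :: (q.support.concat v) := by
    rw [hWfulldef, SimpleGraph.Walk.support_cons, hW2def, SimpleGraph.Walk.support_concat,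
      hqHsupp, List.concat_eq_append]
  have hWedges : Wfull.edges = s(u, a) :: (q.edges.concat s(b, v)) := by
    rw [hWfulldef, SimpleGraph.Walk.edges_cons, hW2def, SimpleGraph.Walk.edges_concat, hqHedges]
  have hWpath : Wfull.IsPath := by
    rw [SimpleGraph.Walk.isPath_def, hWsupp, List.concat_eq_append, List.nodup_cons,
      List.nodup_append]
    refine ⟨?_, hqp.2, List.nodup_singleton v, ?_⟩
    · rw [List.mem_append, List.mem_singleton]
      rintro (h | h)
      · exact hunotq h
      · exact huv h
    · intro z hz z' hz'
      rw [List.mem_singleton] at hz'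
      intro hzz; rw [hzz, hz'] at hz; exact hvnotq hz
  have h3u : IsThreeVertex H u := by
    show (H.neighborSet u).ncard = 3
    rw [hHdef, Statement5Aux.deleteEdges_nbr_of_uncovered hMmissu]
    exact hcubic u
  have h3v : IsThreeVertex H v := by
    show (H.neighborSet v).ncard = 3
    rw [hHdef, Statement5Aux.deleteEdges_nbr_of_uncovered hMmissv]
    exact hcubic v
  have h2w : ∀ w : V, w ≠ u → w ≠ v → IsTwoVertex H w := by
    intro w hwu hwv
    obtain ⟨e, he, hwe⟩ := hMcover w hwu hwv
    obtain ⟨pw, hpadj, -, hset⟩ := Statement5Aux.deleteEdges_nbr_of_covered hMG hMpair he hwe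
    show (H.neighborSet w).ncard = 2
    have hpmem : pw ∈ G.neighborSet w := hpadj
    rw [hHdef, hset, Set.ncard_diff_singleton_of_mem hpmem, hcubic w]
  have hend : ∀ e ∈ Wfull.edges, (u ∈ e ∨ v ∈ e) → e ∈ F.edgeSet := by
    intro e he huv'
    rw [hWedges, List.mem_cons, List.concat_eq_append, List.mem_append,
      List.mem_singleton] at he
    rcases he with rfl | he | rfl
    · exact (F.mem_edgeSet).2 hau.symm
    · exfalso
      rcases huv' with hu | hv
      · exact hunotq (Statement5Aux.mem_support_of_mem_edges' q he hu)
      · exact hvnotq (Statement5Aux.mem_support_of_mem_edges' q he hv)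
    · exact (F.mem_edgeSet).2 hbv
  have hsimple : ∀ e ∈ Wfull.edges, (e ∈ F.edgeSet ∧ ∀ w ∈ e, OnOddCycle F w) →
      (u ∈ e ∨ v ∈ e) := by
    intro e he hcond
    rw [hWedges, List.mem_cons, List.concat_eq_append, List.mem_append,
      List.mem_singleton] at he
    rcases he with rfl | he | rfl
    · exact Or.inl (Sym2.mem_mk_left u a)
    · exfalso
      have heK : e ∈ K.edgeSet := q.edges_subset_edgeSet he
      rw [hKdef, SimpleGraph.edgeSet_deleteEdges] at heK
      exact heK.2 (Or.inl ⟨hcond.1, hcond.2⟩)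
    · exact Or.inr (Sym2.mem_mk_right b v)
  refine ⟨M, ⟨⟨hMF, ?_⟩, hmaxM⟩, ?_⟩
  · rintro e₁ h₁ e₂ h₂ hne ⟨w, hw₁, hw₂⟩
    exact hMpair e₁ h₁ e₂ h₂ hne w hw₁ hw₂
  refine ⟨{⟨u, v, Wfull, hWpath, by rw [hWfulldef]; simp, ⟨h3u, h3v⟩,
    fun w _ h1 h2 => h2w w h1 h2, hend⟩}, ⟨?_, ?_⟩, ?_⟩
  · rintro P₁ hP₁ P₂ hP₂ hne
    rw [Set.mem_singleton_iff] at hP₁ hP₂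
    exact absurd (hP₁.trans hP₂.symm) hne
  · intro w h3w
    refine ⟨_, Set.mem_singleton _, ?_⟩
    have hwuv : w = u ∨ w = v := by
      by_contra hcon2
      push_neg at hcon2
      have ht2 : (H.neighborSet w).ncard = 2 := h2w w hcon2.1 hcon2.2
      have ht3 : (H.neighborSet w).ncard = 3 := h3w
      omega
    show w ∈ {x | x ∈ Wfull.support}
    rcases hwuv with rfl | rfl
    · exact Wfull.start_mem_support
    · exact Wfull.end_mem_support
  · rintro P' hP' e he hcond
    rw [Set.mem_singleton_iff] at hP'
    subst hP'
    exact hsimple e he hcond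
end
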